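/- Let κ ≥ 1. Let x and y be two new letters not in V, and for a vertex v_i define pre(v_i) = x v_1 v_2 ⋯ v_{i−1} and suf(v_i) = v_i v_{i+1} ⋯ v_n. Define the targets T_v = x v_1 v_2 ⋯ v_n and T_e = y ∏_{j=1}^m ( pre(u_j) suf(w_j) y ), where e_j = {u_j, w_j} is the j-th edge with index(u_j) < index(w_j) and the edges are listed in lexicographic order. Take pairwise distinct blocks X_i and X′_i (1 ≤ i ≤ κ), X_{i,j} and X′_{j,i} (1 ≤ i < j ≤ κ), and fresh joker blocks (one per occurrence of * below, each occurring exactly once in the whole system). The system consists of: the size-2 equations T_v ≡ X_i X′_i for each 1 ≤ i ≤ κ, and T_v ≡ X_{i,j} X′_i and T_v ≡ X_j X′_{j,i} for each 1 ≤ i < j ≤ κ; together with the single duplicate-free equation T_e ≡ * ∏_{1 ≤ i < j ≤ κ} ( X_{i,j} X′_{j,i} * ), the product over the pairs (i, j) in lexicographic order. Then the system is satisfied by some assignment if and only if G contains a clique of size κ. (Correctness of the reduction in Theorem 5.3.) -/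

import Mathlib

namespace Stmt10

/-- The pairs `(i, j)` with `i < j`, listed in lexicographic order. -/
def pairs (κ : ℕ) : List (Fin κ × Fin κ) :=
  (List.finRange κ).flatMap fun i =>
    ((List.finRange κ).filter fun j => decide (i < j)).map fun j => (i, j)

/-- The alphabet `Σ = V ∪ {x, y}`. -/
abbrev Letter (n : ℕ) := Fin n ⊕ Bool

def vtx {n : ℕ} (i : Fin n) : Letter n := Sum.inl i
def xSep {n : ℕ} : Letter n := Sum.inr false
def ySep {n : ℕ} : Letter n := Sum.inr true

/-- `pre vᵢ = x v₁ v₂ ⋯ v_{i−1}`. -/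
def pre (n : ℕ) (i : Fin n) : List (Letter n) :=
  [xSep] ++ (((List.finRange n).filter fun k => decide (k < i)).map vtx)

/-- `suf vᵢ = vᵢ v_{i+1} ⋯ v_n`. -/
def suf (n : ℕ) (i : Fin n) : List (Letter n) :=
  ((List.finRange n).filter fun k => decide (i ≤ k)).map vtx

/-- `T_v = x v₁ v₂ ⋯ v_n`. -/
def Tv (n : ℕ) : List (Letter n) :=
  [xSep] ++ (List.finRange n).map vtx

/-- `T_e = y ∏_{j=1}^m (pre(u_j) suf(w_j) y)` for the lexicographically sorted edge
list with `e_j = (u_j, w_j)`, `index u_j < index w_j`. -/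
def Te (n m : ℕ) (edges : Fin m → Fin n × Fin n) : List (Letter n) :=
  [ySep] ++ (List.finRange m).flatMap fun j =>
    pre n (edges j).1 ++ suf n (edges j).2 ++ [ySep]

/-- The blocks: `Xᵢ`, `X'ᵢ` (for `1 ≤ i ≤ κ`), `X_{i,j}` (`P i j`) and `X'_{j,i}`
(`P' i j`) for `i < j`, and the fresh joker blocks `J0` and `J i j` (one per
occurrence of `*`, each occurring exactly once in the whole system). -/
inductive Blk (κ : ℕ) where
  | X (i : Fin κ)
  | X' (i : Fin κ)
  | P (i j : Fin κ)
  | P' (i j : Fin κ)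
  | J0
  | J (i j : Fin κ)

/-- The single size-`c` duplicate-free pattern `* ∏_{i<j} (X_{i,j} X'_{j,i} *)`,
the product over the pairs `(i, j)` in lexicographic order. -/
def patternE (κ : ℕ) : List (Blk κ) :=
  [Blk.J0] ++ (pairs κ).flatMap fun p =>
    [Blk.P p.1 p.2, Blk.P' p.1 p.2, Blk.J p.1 p.2]

/-! ### Auxiliary lemmas -/

section Aux

variable {n : ℕ}

lemma val_lt_of_mem_take {j : ℕ} {x : Fin n} (h : x ∈ (List.finRange n).take j) :
    x.val < j := by
  obtain ⟨i, hi, he⟩ := List.mem_iff_getElem.1 h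
  have hij : i < j := by
    have h2 := hi; rw [List.length_take, List.length_finRange] at h2; omega
  have hin : i < n := by
    have h2 := hi; rw [List.length_take, List.length_finRange] at h2; omega
  rw [List.getElem_take, List.getElem_finRange] at he
  subst he; simpa using hij

lemma le_val_of_mem_drop {j : ℕ} {x : Fin n} (h : x ∈ (List.finRange n).drop j) :
    j ≤ x.val := by
  obtain ⟨i, hi, he⟩ := List.mem_iff_getElem.1 h
  rw [List.getElem_drop, List.getElem_finRange] at he
  subst he; simp

lemma filter_lt_eq_take (k : Fin n) :
    ((List.finRange n).filter fun j => decide (j < k)) = (List.finRange n).take k.val := by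
  conv_lhs => rw [← List.take_append_drop k.val (List.finRange n)]
  rw [List.filter_append]
  rw [List.filter_eq_self.2 (fun a ha => by
    simpa using Fin.lt_def.2 (val_lt_of_mem_take ha))]
  rw [List.filter_eq_nil_iff.2 (fun a ha => by
    simp only [decide_eq_true_eq]
    exact not_lt.2 (Fin.le_def.2 (le_val_of_mem_drop ha)))]
  simp

lemma filter_le_eq_drop (k : Fin n) :
    ((List.finRange n).filter fun j => decide (k ≤ j)) = (List.finRange n).drop k.val := by
  conv_lhs => rw [← List.take_append_drop k.val (List.finRange n)]
  rw [List.filter_append]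
  rw [List.filter_eq_nil_iff.2 (fun a ha => by
    simp only [decide_eq_true_eq]
    exact not_le.2 (Fin.lt_def.2 (val_lt_of_mem_take ha)))]
  rw [List.filter_eq_self.2 (fun a ha => by
    simpa using Fin.le_def.2 (le_val_of_mem_drop ha))]
  simp

lemma pre_eq (k : Fin n) :
    pre n k = xSep :: ((List.finRange n).take k.val).map vtx := by
  rw [pre, filter_lt_eq_take]; rfl

lemma suf_eq (k : Fin n) :
    suf n k = ((List.finRange n).drop k.val).map vtx := by
  rw [suf, filter_le_eq_drop]

lemma pre_append_suf (k : Fin n) : pre n k ++ suf n k = Tv n := by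
  rw [pre_eq, suf_eq, Tv]
  simp [← List.map_append]

lemma pre_ne_nil (k : Fin n) : pre n k ≠ [] := by rw [pre_eq]; simp

lemma suf_ne_nil (k : Fin n) : suf n k ≠ [] := by
  rw [suf_eq]
  have hm : (k : Fin n) ∈ (List.finRange n).drop k.val := by
    rw [List.mem_iff_getElem]
    exact ⟨0, by simp [k.isLt], by simp⟩
  intro h
  rw [List.map_eq_nil_iff] at h
  simp [h] at hm

lemma length_pre (k : Fin n) : (pre n k).length = k.val + 1 := by
  rw [pre_eq]; simp [k.isLt.le]

lemma length_suf (k : Fin n) : (suf n k).length = n - k.val := by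
  rw [suf_eq]; simp

lemma pre_injective {k k' : Fin n} (h : pre n k = pre n k') : k = k' := by
  have h2 := congrArg List.length h
  rw [length_pre, length_pre] at h2
  exact Fin.ext (by omega)

lemma suf_injective {k k' : Fin n} (h : suf n k = suf n k') : k = k' := by
  have h2 := congrArg List.length h
  rw [length_suf, length_suf] at h2
  have h1 := k.isLt; have h1' := k'.isLt
  exact Fin.ext (by omega)

lemma split_Tv {u v : List (Letter n)} (hu : u ≠ []) (hv : v ≠ [])
    (h : u ++ v = Tv n) : ∃ k : Fin n, u = pre n k ∧ v = suf n k := by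
  rcases u with _ | ⟨c, u'⟩
  · exact absurd rfl hu
  rw [Tv, List.cons_append] at h
  simp only [List.singleton_append] at h
  rw [List.cons_eq_cons] at h
  obtain ⟨hc, h⟩ := h
  obtain ⟨l1, l2, hF, h1, h2⟩ := List.append_eq_map_iff.1 h
  rcases l2 with _ | ⟨k, l2'⟩
  · simp only [List.map_nil] at h2; exact absurd h2.symm hv
  have hlen : l1.length < n := by
    have h3 := congrArg List.length hF
    simp at h3; omega
  have hk : k = Fin.mk l1.length hlen := by
    have h0 : (List.finRange n)[l1.length]? = some k := by
      rw [hF, List.getElem?_append_right (le_refl _)]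
      simp
    rw [List.getElem?_eq_getElem (by simpa using hlen), List.getElem_finRange] at h0
    have := Option.some.inj h0
    exact this.symm
  have hkv : (k : ℕ) = l1.length := by rw [hk]
  have hl1 : l1 = (List.finRange n).take k.val := by
    rw [hkv, hF, List.take_left]
  have hl2 : k :: l2' = (List.finRange n).drop k.val := by
    rw [hkv, hF, List.drop_left]
  refine ⟨k, ?_, ?_⟩
  · rw [pre_eq, ← hl1, ← h1, hc]
  · rw [suf_eq, ← hl2, ← h2]

/-- The string contributed by one edge in `T_e`. -/
def blockStr (e : Fin n × Fin n) : List (Letter n) :=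
  pre n e.1 ++ (suf n e.2 ++ [ySep])

lemma Te_eq (m : ℕ) (edges : Fin m → Fin n × Fin n) :
    Te n m edges = ySep :: ((List.finRange m).map edges).flatMap blockStr := by
  rw [Te, List.flatMap_map]
  simp [blockStr, Function.comp, List.append_assoc]

lemma blockStr_eq (e : Fin n × Fin n) :
    blockStr e = xSep ::
      (((List.finRange n).take e.1.val).map vtx ++ (suf n e.2 ++ [ySep])) := by
  rw [blockStr, pre_eq]; rfl

lemma xSep_not_mem_tail (e : Fin n × Fin n) :
    xSep ∉ (((List.finRange n).take e.1.val).map vtx ++ (suf n e.2 ++ [ySep])) := by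
  intro h
  rcases List.mem_append.1 h with h1 | h1
  · obtain ⟨a, -, ha⟩ := List.mem_map.1 h1
    exact absurd ha (by simp [vtx, xSep])
  · rcases List.mem_append.1 h1 with h2 | h2
    · rw [suf_eq] at h2
      obtain ⟨a, -, ha⟩ := List.mem_map.1 h2
      exact absurd ha (by simp [vtx, xSep])
    · simp [xSep, ySep] at h2

lemma eat_prefix {α : Type*} :
    ∀ (r A B Z : List α) (c : α), c ∉ r → A ++ c :: B = r ++ Z →
      ∃ A', A = r ++ A' ∧ A' ++ c :: B = Z := by
  intro r
  induction r with
  | nil => exact fun A B Z c _ h => ⟨A, rfl, h⟩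
  | cons h t ih =>
    intro A B Z c hc hAB
    rcases A with _ | ⟨a, A'⟩
    · rw [List.nil_append, List.cons_append, List.cons_eq_cons] at hAB
      exact absurd (hAB.1 ▸ @List.mem_cons_self _ h t) hc
    · rw [List.cons_append, List.cons_append, List.cons_eq_cons] at hAB
      obtain ⟨A'', h1, h2⟩ := ih A' B Z c (fun hm => hc (List.mem_cons_of_mem h hm)) hAB.2
      exact ⟨A'', by rw [List.cons_append, hAB.1, h1], h2⟩

lemma xpos : ∀ (E : List (Fin n × Fin n)) (A B : List (Letter n)),
    A ++ xSep :: B = E.flatMap blockStr →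
    ∃ E1 e E2, E = E1 ++ e :: E2 ∧ A = E1.flatMap blockStr ∧
      xSep :: B = blockStr e ++ E2.flatMap blockStr := by
  intro E
  induction E with
  | nil =>
    intro A B h
    rw [List.flatMap_nil, List.append_eq_nil_iff] at h
    exact absurd h.2 (by simp)
  | cons e E' ih =>
    intro A B h
    rw [List.flatMap_cons] at h
    rcases A with _ | ⟨c, A'⟩
    · exact ⟨[], e, E', rfl, rfl, by simpa using h⟩
    · rw [blockStr_eq e, List.cons_append, List.cons_append, List.cons_eq_cons] at h
      obtain ⟨A'', h1, h2⟩ := eat_prefix _ A' B _ xSep (xSep_not_mem_tail e) h.2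
      obtain ⟨E1, e', E2, hE, hA'', hx⟩ := ih A'' B h2
      refine ⟨e :: E1, e', E2, by rw [hE, List.cons_append], ?_, hx⟩
      rw [List.flatMap_cons, blockStr_eq e, h.1, h1, hA'']
      simp

lemma block_match {a b u w : Fin n} (huw : u < w) {r R : List (Letter n)}
    (h0 : pre n a ++ (suf n b ++ r) = blockStr (u, w) ++ R) :
    a = u ∧ b = w ∧ r = ySep :: R := by
  have hbn := b.isLt; have hwn := w.isLt; have han := a.isLt; have hun := u.isLt
  set F := List.finRange n with hF
  set La := F.take a.val ++ F.drop b.val with hLa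
  set Lu := F.take u.val ++ F.drop w.val with hLu
  have h : La.map vtx ++ r = Lu.map vtx ++ (ySep :: R) := by
    rw [blockStr] at h0
    rw [pre_eq, pre_eq, suf_eq, suf_eq] at h0
    simp only [List.map_append, List.cons_append, List.append_assoc, List.cons.injEq,
      List.singleton_append, true_and] at h0
    simp only [hLa, hLu, List.map_append, List.append_assoc]
    exact h0
  have hlenF : F.length = n := by simp [hF]
  have hatlen : (F.take a.val).length = a.val := by rw [List.length_take, hlenF]; omega
  have hutlen : (F.take u.val).length = u.val := by rw [List.length_take, hlenF]; omega
  have hLaLen : La.length = a.val + (n - b.val) := by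
    rw [hLa, List.length_append, hatlen, List.length_drop, hlenF]
  have hLuLen : Lu.length = u.val + (n - w.val) := by
    rw [hLu, List.length_append, hutlen, List.length_drop, hlenF]
  have key : ∀ i : ℕ, (La.map vtx ++ r)[i]? = (Lu.map vtx ++ (ySep :: R))[i]? := by
    intro i; rw [h]
  have hgetF : ∀ (i : ℕ) (hi : i < n), F[i]? = some (⟨i, hi⟩ : Fin n) := by
    intro i hi
    rw [hF, List.getElem?_eq_getElem (by simpa using hi), List.getElem_finRange]
    rfl
  have hval : ∀ (i : ℕ) (x y : Fin n), La[i]? = some x → Lu[i]? = some y → x = y := by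
    intro i x y hx hy
    have hxl : i < La.length := by
      by_contra hc
      rw [List.getElem?_eq_none (by omega)] at hx
      cases hx
    have hyl : i < Lu.length := by
      by_contra hc
      rw [List.getElem?_eq_none (by omega)] at hy
      cases hy
    have hk := key i
    rw [List.getElem?_append_left (by simpa using hxl),
      List.getElem?_append_left (by simpa using hyl), List.getElem?_map,
      List.getElem?_map, hx, hy] at hk
    simp only [Option.map_some, Option.some.injEq, vtx, Sum.inl.injEq] at hk
    exact hk
  have hLalow : ∀ (i : ℕ) (h1 : i < a.val), La[i]? = some (⟨i, Nat.lt_trans h1 han⟩ : Fin n) := by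
    intro i h1
    rw [hLa, List.getElem?_append_left (by rw [hatlen]; omega), List.getElem?_take,
      if_pos h1, hgetF i (Nat.lt_trans h1 han)]
  have hLaa : La[a.val]? = some b := by
    rw [hLa, List.getElem?_append_right (by omega), hatlen, Nat.sub_self,
      List.getElem?_drop, Nat.add_zero, hgetF b.val hbn]
  have hLamid : ∀ (i : ℕ), a.val ≤ i → ∀ h2 : i < n, b.val = a.val →
      La[i]? = some (⟨i, h2⟩ : Fin n) := by
    intro i h1 h2 h3
    have hidx : b.val + (i - a.val) = i := by omega
    rw [hLa, List.getElem?_append_right (by rw [hatlen]; omega), hatlen,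
      List.getElem?_drop, hidx, hgetF i h2]
  have hLulow : ∀ (i : ℕ) (h1 : i < u.val), Lu[i]? = some (⟨i, Nat.lt_trans h1 hun⟩ : Fin n) := by
    intro i h1
    rw [hLu, List.getElem?_append_left (by rw [hutlen]; omega), List.getElem?_take,
      if_pos h1, hgetF i (Nat.lt_trans h1 hun)]
  have hLuu : Lu[u.val]? = some w := by
    rw [hLu, List.getElem?_append_right (by omega), hutlen, Nat.sub_self,
      List.getElem?_drop, Nat.add_zero, hgetF w.val hwn]
  have huwv : u.val < w.val := huw
  have hau : a.val = u.val := by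
    by_contra hne
    rcases Nat.lt_or_ge a.val u.val with hlt | hge
    · have hba : b = (⟨a.val, han⟩ : Fin n) := hval a.val _ _ hLaa (hLulow a.val hlt)
      have hbav : b.val = a.val := by rw [hba]
      have h4 : (⟨u.val, hun⟩ : Fin n) = w :=
        hval u.val _ _ (hLamid u.val (by omega) hun hbav) hLuu
      have : u.val = w.val := by rw [← h4]
      omega
    · have hgt : u.val < a.val := by omega
      have h4 : (⟨u.val, hun⟩ : Fin n) = w := hval u.val _ _ (hLalow u.val hgt) hLuu
      have : u.val = w.val := by rw [← h4]
      omega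
  have hbw : b = w := by
    have hLua : Lu[a.val]? = some w := by rw [show a.val = u.val from hau]; exact hLuu
    exact hval a.val _ _ hLaa hLua
  have haueq : a = u := Fin.ext hau
  refine ⟨haueq, hbw, ?_⟩
  have hLaLu : La = Lu := by rw [hLa, hLu, haueq, hbw]
  rw [hLaLu] at h
  exact List.append_cancel_left h

lemma claimC {κ : ℕ} (a b : Fin κ × Fin κ → Fin n) (Jf : Fin κ × Fin κ → List (Letter n)) :
    ∀ (P : List (Fin κ × Fin κ)) (A : List (Letter n)) (E : List (Fin n × Fin n)),
    (∀ e ∈ E, e.1 < e.2) → (∀ p ∈ P, Jf p ≠ []) →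
    A ++ P.flatMap (fun p => pre n (a p) ++ (suf n (b p) ++ Jf p)) = E.flatMap blockStr →
    ∀ p ∈ P, (a p, b p) ∈ E := by
  intro P
  induction P with
  | nil => simp
  | cons p P' ih =>
    intro A E hE hJ h
    rw [List.flatMap_cons] at h
    have h' : A ++ xSep :: (((List.finRange n).take (a p).val).map vtx ++
        (suf n (b p) ++ (Jf p ++ P'.flatMap (fun q => pre n (a q) ++ (suf n (b q) ++ Jf q))))) =
        E.flatMap blockStr := by
      rw [← h, pre_eq]
      simp only [List.cons_append, List.append_assoc, List.nil_append]
    obtain ⟨E1, e, E2, hEsplit, hA, h3⟩ := xpos E _ _ h'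
    have he : e ∈ E := by rw [hEsplit]; simp
    have h4 : pre n (a p) ++ (suf n (b p) ++
        (Jf p ++ P'.flatMap (fun q => pre n (a q) ++ (suf n (b q) ++ Jf q)))) =
        blockStr (e.1, e.2) ++ E2.flatMap blockStr := by
      rw [pre_eq]
      simp only [List.cons_append, List.append_assoc]
      exact h3
    obtain ⟨hap, hbp, h5⟩ := block_match (hE e he) h4
    have hJp := hJ p List.mem_cons_self
    obtain ⟨c, J', hJ'⟩ := List.exists_cons_of_ne_nil hJp
    rw [hJ', List.cons_append, List.cons_eq_cons] at h5
    have h6 : J' ++ P'.flatMap (fun q => pre n (a q) ++ (suf n (b q) ++ Jf q)) =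
        E2.flatMap blockStr := h5.2
    have ihres := ih J' E2
      (fun e' he' => hE e' (by rw [hEsplit]; simp [he']))
      (fun q hq => hJ q (List.mem_cons_of_mem _ hq)) h6
    intro q hq
    rcases List.mem_cons.1 hq with rfl | hq'
    · rw [hap, hbp]
      simpa using he
    · have hq2 := ihres q hq'
      rw [hEsplit]
      simp only [List.mem_append, List.mem_cons]
      exact Or.inr (Or.inr hq2)

/-- The strict lexicographic order on pairs. -/
def elex (p q : Fin n × Fin n) : Prop :=
  p.1 < q.1 ∨ (p.1 = q.1 ∧ p.2 < q.2)

lemma elex_trans : ∀ {x y z : Fin n × Fin n}, elex x y → elex y z → elex x z := by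
  rintro x y z (h | ⟨h, h'⟩) (g | ⟨g, g'⟩)
  · exact Or.inl (lt_trans h g)
  · exact Or.inl (g ▸ h)
  · exact Or.inl (h ▸ g)
  · exact Or.inr ⟨h.trans g, lt_trans h' g'⟩

lemma elex_irrefl : ∀ x : Fin n × Fin n, ¬ elex x x := by
  rintro x (h | ⟨-, h⟩) <;> exact lt_irrefl _ h

lemma sublist_of_sorted {α : Type*} {r : α → α → Prop}
    (htr : ∀ {x y z : α}, r x y → r y z → r x z) (hirr : ∀ x, ¬ r x x) :
    ∀ (E Q : List α), Q.Pairwise r → E.Pairwise r → (∀ q ∈ Q, q ∈ E) → Q.Sublist E := by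
  intro E
  induction E with
  | nil =>
    intro Q _ _ hsub
    rcases Q with _ | ⟨q, Q'⟩
    · exact List.Sublist.refl _
    · exact absurd (hsub q List.mem_cons_self) (by simp)
  | cons e E' ih =>
    intro Q hQ hE hsub
    rcases Q with _ | ⟨q, Q'⟩
    · exact List.nil_sublist _
    rw [List.pairwise_cons] at hQ hE
    by_cases hqe : q = e
    · subst hqe
      refine List.Sublist.cons₂ q (ih Q' hQ.2 hE.2 ?_)
      intro q' hq'
      rcases List.mem_cons.1 (hsub q' (List.mem_cons_of_mem _ hq')) with h | h
      · exact absurd (h ▸ hQ.1 q' hq') (hirr q)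
      · exact h
    · have hqE' : q ∈ E' := by
        rcases List.mem_cons.1 (hsub q List.mem_cons_self) with h | h
        · exact absurd h hqe
        · exact h
      have hsub' : ∀ q' ∈ q :: Q', q' ∈ E' := by
        intro q' hq'
        rcases List.mem_cons.1 (hsub q' hq') with h | h
        · exfalso
          subst h
          rcases List.mem_cons.1 hq' with h2 | h2
          · exact hqe h2.symm
          · exact hirr _ (htr (hE.1 q hqE') (hQ.1 _ h2))
        · exact h
      exact List.Sublist.cons e (ih (q :: Q') (List.pairwise_cons.2 hQ) hE.2 hsub')

lemma mem_pairs {κ : ℕ} {p : Fin κ × Fin κ} : p ∈ pairs κ ↔ p.1 < p.2 := by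
  constructor
  · intro h
    simp only [pairs, List.mem_flatMap, List.mem_map, List.mem_filter] at h
    obtain ⟨i, -, j, ⟨-, hj⟩, rfl⟩ := h
    simpa using hj
  · intro h
    simp only [pairs, List.mem_flatMap, List.mem_map, List.mem_filter]
    exact ⟨p.1, List.mem_finRange _, p.2, ⟨List.mem_finRange _, by simpa using h⟩, rfl⟩

lemma pairs_pairwise (κ : ℕ) : (pairs κ).Pairwise
    (fun p q : Fin κ × Fin κ => p.1 < q.1 ∨ (p.1 = q.1 ∧ p.2 < q.2)) := by
  rw [pairs, List.pairwise_flatMap]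
  constructor
  · intro i _
    rw [List.pairwise_map]
    exact ((List.pairwise_lt_finRange κ).filter _).imp (fun h => Or.inr ⟨rfl, h⟩)
  · refine (List.pairwise_lt_finRange κ).imp ?_
    intro i1 i2 h x hx y hy
    simp only [List.mem_map, List.mem_filter] at hx hy
    obtain ⟨j1, -, rfl⟩ := hx
    obtain ⟨j2, -, rfl⟩ := hy
    exact Or.inl h

lemma flatMap_congr' {α β : Type*} {l : List α} {f g : α → List β}
    (h : ∀ a ∈ l, f a = g a) : l.flatMap f = l.flatMap g := by
  induction l with
  | nil => rfl
  | cons a t ih =>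
    rw [List.flatMap_cons, List.flatMap_cons, h a List.mem_cons_self,
      ih (fun x hx => h x (List.mem_cons_of_mem _ hx))]

lemma buildJ {κ : ℕ} (g : Fin κ → Fin n) :
    ∀ (E : List (Fin n × Fin n)) (P : List (Fin κ × Fin κ)), P.Nodup →
    (P.map fun p => ((g p.1, g p.2) : Fin n × Fin n)).Sublist E →
    ∃ (A : List (Letter n)) (σJ : Fin κ × Fin κ → List (Letter n)),
      (∀ p, σJ p ≠ []) ∧
      A ++ P.flatMap (fun p => pre n (g p.1) ++ (suf n (g p.2) ++ σJ p)) =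
        E.flatMap blockStr := by
  intro E
  induction E with
  | nil =>
    intro P _ hs
    have hP : P = [] := by simpa using List.sublist_nil.1 hs
    subst hP
    exact ⟨[], fun _ => [ySep], fun _ => by simp, by simp⟩
  | cons e E' ih =>
    intro P hnd hs
    rcases P with _ | ⟨p, P'⟩
    · exact ⟨(e :: E').flatMap blockStr, fun _ => [ySep], fun _ => by simp, by simp⟩
    rw [List.map_cons] at hs
    cases hs with
    | cons _ hs' =>
      obtain ⟨A, σJ, hne, hA⟩ := ih (p :: P') hnd hs'
      refine ⟨blockStr e ++ A, σJ, hne, ?_⟩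
      rw [List.append_assoc, hA, List.flatMap_cons]
    | cons_cons _ hs' =>
      obtain ⟨A, σJ, hne, hA⟩ := ih P' (List.nodup_cons.1 hnd).2 hs'
      have hpP' : p ∉ P' := (List.nodup_cons.1 hnd).1
      refine ⟨[], fun q => if q = p then ySep :: A else σJ q, ?_, ?_⟩
      · intro q
        by_cases hq : q = p
        · simp [hq]
        · simp [hq, hne q]
      · rw [List.nil_append, List.flatMap_cons]
        have hcong : P'.flatMap (fun q => pre n (g q.1) ++ (suf n (g q.2) ++
            if q = p then ySep :: A else σJ q)) =
            P'.flatMap (fun q => pre n (g q.1) ++ (suf n (g q.2) ++ σJ q)) := by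
          apply flatMap_congr'
          intro q hq
          rw [if_neg (show ¬(q = p) from fun hh => hpP' (hh ▸ hq))]
        have hbeta : (fun q => if q = p then ySep :: A else σJ q) p = ySep :: A := by simp
        rw [hcong, hbeta, List.flatMap_cons, ← hA, blockStr]
        simp [List.append_assoc]

end Aux

/-- **correctness of the reduction in Theorem 5.3.** Let `κ ≥ 1` and let
`G` be a graph on `{v₀, …, v_{n-1}}` whose edge list (each edge an ordered pair, smaller
endpoint first) is sorted lexicographically. The system consisting of the size-2
equations `T_v ≡ Xᵢ X'ᵢ` (for each `i`), and `T_v ≡ X_{i,j} X'ᵢ`, `T_v ≡ Xⱼ X'_{j,i}`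
(for each `i < j`), together with the single duplicate-free equation
`T_e ≡ * ∏_{i<j} (X_{i,j} X'_{j,i} *)`, is satisfied by some assignment of nonempty
strings to the blocks iff `G` contains a clique of size `κ`. -/
theorem stmt_10 (n m κ : ℕ) (hκ : 1 ≤ κ)
    (edges : Fin m → Fin n × Fin n)
    (horder : ∀ j, (edges j).1 < (edges j).2)
    (hsorted : ∀ j j' : Fin m, j < j' →
      (edges j).1 < (edges j').1 ∨
        ((edges j).1 = (edges j').1 ∧ (edges j).2 < (edges j').2)) :
    (∃ σ : Blk κ → List (Letter n),
        (∀ b, σ b ≠ []) ∧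
        (∀ i : Fin κ, [Blk.X i, Blk.X' i].flatMap σ = Tv n) ∧
        (∀ i j : Fin κ, i < j → [Blk.P i j, Blk.X' i].flatMap σ = Tv n) ∧
        (∀ i j : Fin κ, i < j → [Blk.X j, Blk.P' i j].flatMap σ = Tv n) ∧
        (patternE κ).flatMap σ = Te n m edges) ↔
    (∃ S : Finset (Fin n), S.card = κ ∧
        ∀ u ∈ S, ∀ w ∈ S, u ≠ w →
          ∃ j : Fin m, edges j = (u, w) ∨ edges j = (w, u)) := by
  constructor
  · rintro ⟨σ, hne, hX, hP, hP', hEq⟩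
    have hX2 : ∀ i, σ (Blk.X i) ++ σ (Blk.X' i) = Tv n := by
      intro i; have := hX i; simpa using this
    choose f hfpre hfsuf using fun i => split_Tv (hne _) (hne _) (hX2 i)
    have hσP : ∀ i j : Fin κ, i < j → σ (Blk.P i j) = pre n (f i) := by
      intro i j hij
      have h2 : σ (Blk.P i j) ++ σ (Blk.X' i) = Tv n := by
        have := hP i j hij; simpa using this
      obtain ⟨k, hk1, hk2⟩ := split_Tv (hne _) (hne _) h2
      have : k = f i := suf_injective (hk2.symm.trans (hfsuf i))
      rw [hk1, this]
    have hσP' : ∀ i j : Fin κ, i < j → σ (Blk.P' i j) = suf n (f j) := by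
      intro i j hij
      have h2 : σ (Blk.X j) ++ σ (Blk.P' i j) = Tv n := by
        have := hP' i j hij; simpa using this
      obtain ⟨k, hk1, hk2⟩ := split_Tv (hne _) (hne _) h2
      have : k = f j := pre_injective (hk1.symm.trans (hfpre j))
      rw [hk2, this]
    have hEq2 : σ Blk.J0 ++ (pairs κ).flatMap
        (fun p => pre n (f p.1) ++ (suf n (f p.2) ++ σ (Blk.J p.1 p.2))) =
        ySep :: ((List.finRange m).map edges).flatMap blockStr := by
      rw [← Te_eq, ← hEq, patternE]
      rw [List.flatMap_append, List.flatMap_assoc]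
      simp only [List.flatMap_cons, List.flatMap_nil, List.append_nil,
        List.singleton_append, List.cons_append, List.nil_append]
      congr 1
      apply flatMap_congr'
      intro p hp
      rw [hσP p.1 p.2 (mem_pairs.1 hp), hσP' p.1 p.2 (mem_pairs.1 hp)]
    obtain ⟨c, t, hJ0⟩ := List.exists_cons_of_ne_nil (hne Blk.J0)
    rw [hJ0, List.cons_append, List.cons_eq_cons] at hEq2
    have hEfull : ∀ e ∈ (List.finRange m).map edges, e.1 < e.2 := by
      intro e he
      obtain ⟨j, -, rfl⟩ := List.mem_map.1 he
      exact horder j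
    have hmem : ∀ p ∈ pairs κ, ((f p.1, f p.2) : Fin n × Fin n) ∈
        (List.finRange m).map edges :=
      claimC (fun p => f p.1) (fun p => f p.2) (fun p => σ (Blk.J p.1 p.2))
        (pairs κ) t _ hEfull (fun p _ => hne _) hEq2.2
    have hflt : ∀ i j : Fin κ, i < j → f i < f j := by
      intro i j hij
      have h2 := hmem (i, j) (mem_pairs.2 hij)
      obtain ⟨jj, -, hjj⟩ := List.mem_map.1 h2
      have := horder jj
      rw [hjj] at this
      exact this
    have finj : Function.Injective f := by
      intro i j hfij
      rcases lt_trichotomy i j with h' | h' | h'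
      · exact absurd (hfij ▸ hflt i j h') (lt_irrefl _)
      · exact h'
      · exact absurd (hfij ▸ hflt j i h') (lt_irrefl _)
    refine ⟨Finset.image f Finset.univ, ?_, ?_⟩
    · rw [Finset.card_image_of_injective _ finj, Finset.card_univ, Fintype.card_fin]
    · intro u hu w hw huw
      obtain ⟨i, -, rfl⟩ := Finset.mem_image.1 hu
      obtain ⟨j, -, rfl⟩ := Finset.mem_image.1 hw
      have hij : i ≠ j := fun h => huw (by rw [h])
      rcases lt_trichotomy i j with h' | h' | h'
      · obtain ⟨jj, -, hjj⟩ := List.mem_map.1 (hmem (i, j) (mem_pairs.2 h'))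
        exact ⟨jj, Or.inl hjj⟩
      · exact absurd h' hij
      · obtain ⟨jj, -, hjj⟩ := List.mem_map.1 (hmem (j, i) (mem_pairs.2 h'))
        exact ⟨jj, Or.inr hjj⟩
  · rintro ⟨S, hcard, hclq⟩
    set g : Fin κ → Fin n := fun i => S.orderEmbOfFin hcard i with hg
    have hgmono : StrictMono g := (S.orderEmbOfFin hcard).strictMono
    have hgmem : ∀ i, g i ∈ S := fun i => S.orderEmbOfFin_mem hcard i
    have hmemE : ∀ p ∈ pairs κ, ((g p.1, g p.2) : Fin n × Fin n) ∈
        (List.finRange m).map edges := by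
      intro p hp
      have hij := mem_pairs.1 hp
      have hgl := hgmono hij
      obtain ⟨jj, hjj⟩ := hclq _ (hgmem p.1) _ (hgmem p.2) (ne_of_lt hgl)
      rcases hjj with hjj | hjj
      · exact List.mem_map.2 ⟨jj, List.mem_finRange _, hjj⟩
      · exfalso
        have h1 := horder jj
        rw [hjj] at h1
        exact absurd (lt_trans h1 hgl) (lt_irrefl _)
    have lexQ : (((pairs κ).map fun p => ((g p.1, g p.2) : Fin n × Fin n))).Pairwise elex := by
      rw [List.pairwise_map]
      refine (pairs_pairwise κ).imp ?_
      rintro p q (h | ⟨h1, h2⟩)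
      · exact Or.inl (hgmono h)
      · exact Or.inr ⟨by rw [h1], hgmono h2⟩
    have lexE : (((List.finRange m).map edges)).Pairwise elex := by
      rw [List.pairwise_map]
      exact (List.pairwise_lt_finRange m).imp (fun h => hsorted _ _ h)
    have hsubl := sublist_of_sorted (r := (elex (n := n)))
      (fun {x y z} h1 h2 => elex_trans h1 h2) elex_irrefl _ _ lexQ lexE (by
      intro q hq
      obtain ⟨p, hp, rfl⟩ := List.mem_map.1 hq
      exact hmemE p hp)
    have hnodup : (pairs κ).Nodup := by
      refine (pairs_pairwise κ).imp ?_
      rintro p q (h | ⟨h1, h2⟩) <;> intro hpq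
      · exact absurd (hpq ▸ h) (lt_irrefl _)
      · exact absurd (hpq ▸ h2) (lt_irrefl _)
    obtain ⟨A, σJ, hJne, hA⟩ := buildJ g _ _ hnodup hsubl
    refine ⟨fun b => match b with
      | Blk.X i => pre n (g i)
      | Blk.X' i => suf n (g i)
      | Blk.P i j => pre n (g i)
      | Blk.P' i j => suf n (g j)
      | Blk.J0 => ySep :: A
      | Blk.J i j => σJ (i, j), ?_, ?_, ?_, ?_, ?_⟩
    · intro b
      cases b with
      | X i => exact pre_ne_nil _
      | X' i => exact suf_ne_nil _
      | P i j => exact pre_ne_nil _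
      | P' i j => exact suf_ne_nil _
      | J0 => simp
      | J i j => exact hJne _
    · intro i; simp [pre_append_suf]
    · intro i j _; simp [pre_append_suf]
    · intro i j _; simp [pre_append_suf]
    · rw [Te_eq, patternE]
      rw [List.flatMap_append, List.flatMap_assoc]
      simp only [List.flatMap_cons, List.flatMap_nil, List.append_nil,
        List.singleton_append, List.cons_append, List.nil_append]
      rw [← hA]

end Stmt10
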